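/- The quotient of the set of 1-formulas of L_□ by the relation of S5-provable equivalence has exactly 2^32 = 4,294,967,296 elements. -/

import Mathlib

namespace KripkeModal

/-- Formulas of the modal language `L_□`: atoms `T(x)`, `F(x)` for variables
`x : ℕ`, negation, conjunction, and box. -/
inductive Fml : Type
  | tt : ℕ → Fml   -- T(x)
  | ff : ℕ → Fml   -- F(x)
  | neg : Fml → Fml
  | and : Fml → Fml → Fml
  | box : Fml → Fml
deriving DecidableEq

namespace Fml

/-- Material implication, defined from `¬, ∧`. -/
def imp (φ ψ : Fml) : Fml := neg (and φ (neg ψ))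

/-- Disjunction, defined from `¬, ∧`. -/
def or (φ ψ : Fml) : Fml := neg (and (neg φ) (neg ψ))

/-- Biconditional. -/
def iff (φ ψ : Fml) : Fml := and (imp φ ψ) (imp ψ φ)

/-- Diamond: `◇φ := ¬□¬φ`. -/
def dia (φ : Fml) : Fml := neg (box (neg φ))

/-- `N(x) := ¬T(x) ∧ ¬F(x)`. -/
def Nf (x : ℕ) : Fml := and (neg (tt x)) (neg (ff x))

/-- A fixed contradiction. -/
def bot : Fml := and (tt 0) (neg (tt 0))

end Fml

open Fml

/-- Evaluate a formula propositionally under a valuation `v` of the "atoms":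
the atomic formulas `T(x)`, `F(x)` and all boxed formulas are treated as
propositional atoms. -/
def evalProp (v : Fml → Bool) : Fml → Bool
  | Fml.neg φ => !(evalProp v φ)
  | Fml.and φ ψ => evalProp v φ && evalProp v ψ
  | φ => v φ

/-- A formula is a substitution instance of a classical propositional tautology
iff it evaluates to true under every propositional valuation of its atoms. -/
def Tautology (φ : Fml) : Prop := ∀ v : Fml → Bool, evalProp v φ = true

/-- Provability in the modal system `S5[Ax]`: the smallest set of formulas
containing all substitution instances of propositional tautologies, all
instances of K, T and 5, all formulas in `Ax`, closed under modus ponens and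
necessitation.  Taking `Ax = ∅` gives `S5` itself. -/
inductive Prv (Ax : Set Fml) : Fml → Prop
  | taut {φ} : Tautology φ → Prv Ax φ
  | axK (A B : Fml) : Prv Ax (imp (box (imp A B)) (imp (box A) (box B)))
  | axT (A : Fml) : Prv Ax (imp (box A) A)
  | ax5 (A : Fml) : Prv Ax (imp (dia A) (box (dia A)))
  | axm {φ} : φ ∈ Ax → Prv Ax φ
  | mp {A B} : Prv Ax (imp A B) → Prv Ax A → Prv Ax B
  | nec {A} : Prv Ax A → Prv Ax (box A)

/-- A system is consistent if it does not prove a contradiction. -/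
def Consistent (Ax : Set Fml) : Prop := ¬ Prv Ax Fml.bot

/-- The axiom schema `Con`: `¬(T(x) ∧ F(x))`. -/
def ConAx : Set Fml := { φ | ∃ x : ℕ, φ = neg (and (tt x) (ff x)) }

/-- The axiom schema `Ground`: `(◇T(x) ∧ ◇F(x)) → ◇N(x)`. -/
def GroundAx : Set Fml :=
  { φ | ∃ x : ℕ, φ = imp (and (dia (tt x)) (dia (ff x))) (dia (Nf x)) }

/-- Conjunction of a list of formulas (empty conjunction is `¬⊥`). -/
def bigAnd : List Fml → Fml
  | [] => Fml.neg Fml.bot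
  | [φ] => φ
  | φ :: ψ :: rest => Fml.and φ (bigAnd (ψ :: rest))

/-- Disjunction of a list of formulas (the empty disjunction is the fixed
contradiction `⊥`). -/
def bigOr : List Fml → Fml
  | [] => Fml.bot
  | [φ] => φ
  | φ :: ψ :: rest => Fml.or φ (bigOr (ψ :: rest))

/-- The axiom schema `Min_n`: all instances
`(◇N(x_1) ∧ … ∧ ◇N(x_n)) → ◇(N(x_1) ∧ … ∧ N(x_n))` obtained by substituting
arbitrary (not necessarily distinct) variables for `x_1, …, x_n`. -/
def MinAx (n : ℕ) : Set Fml :=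
  { φ | ∃ l : List ℕ, l.length = n ∧
      φ = imp (bigAnd (l.map (fun x => dia (Nf x)))) (dia (bigAnd (l.map Nf))) }

/-- A formula is extensional if it contains no `□`. -/
def Extensional : Fml → Prop
  | tt _ => True
  | ff _ => True
  | Fml.neg φ => Extensional φ
  | Fml.and φ ψ => Extensional φ ∧ Extensional ψ
  | box _ => False

/-- A formula is intensional if every atomic subformula occurs within the
scope of a `□`. -/
def Intensional : Fml → Prop
  | tt _ => False
  | ff _ => False
  | Fml.neg φ => Intensional φ
  | Fml.and φ ψ => Intensional φ ∧ Intensional ψ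
  | box _ => True

/-- The set of variables occurring in a formula. -/
def vars : Fml → Set ℕ
  | tt x => {x}
  | ff x => {x}
  | Fml.neg φ => vars φ
  | Fml.and φ ψ => vars φ ∪ vars ψ
  | box φ => vars φ

/-- An `n`-formula: one whose atoms use only the variables `x_1, …, x_n`. -/
def IsNFormula (n : ℕ) (φ : Fml) : Prop := vars φ ⊆ {x | 1 ≤ x ∧ x ≤ n}

/-- A 1-formula: one whose atoms use only the single variable `x_1`. -/
abbrev Is1Formula (φ : Fml) : Prop := IsNFormula 1 φ

/-- `φ` is `Γ`-maximal for the system `S5[Ax]`. -/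
def GammaMaximal (Ax : Set Fml) (Γ : Set Fml) (φ : Fml) : Prop :=
  Consistent (Ax ∪ {φ}) ∧ φ ∈ Γ ∧
    ∀ ψ ∈ Γ, Prv Ax (imp φ ψ) ∨ Prv Ax (imp φ (neg ψ))

/-- Extensional `n`-isolators for `S5[Ax]`. -/
def ExtIsolator (n : ℕ) (Ax : Set Fml) (φ : Fml) : Prop :=
  GammaMaximal Ax {ψ | Extensional ψ ∧ IsNFormula n ψ} φ

/-- Intensional `n`-isolators for `S5[Ax]`. -/
def IntIsolator (n : ℕ) (Ax : Set Fml) (φ : Fml) : Prop :=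
  GammaMaximal Ax {ψ | Intensional ψ ∧ IsNFormula n ψ} φ

/-- An `n`-isolator for `S5[Ax]`: a consistent conjunction `ε ∧ ι` of an
extensional `n`-isolator and an intensional `n`-isolator. -/
def Isolator (n : ℕ) (Ax : Set Fml) (φ : Fml) : Prop :=
  ∃ ε ι, ExtIsolator n Ax ε ∧ IntIsolator n Ax ι ∧
    φ = Fml.and ε ι ∧ Consistent (Ax ∪ {φ})

/-- Satisfaction in a model `(W, V)` (with `V = (V1, V2)`) at a world `w`. -/
def Sat {W : Type*} (V1 V2 : ℕ → Set W) : W → Fml → Prop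
  | w, tt x => w ∈ V1 x
  | w, ff x => w ∈ V2 x
  | w, Fml.neg φ => ¬ Sat V1 V2 w φ
  | w, Fml.and φ ψ => Sat V1 V2 w φ ∧ Sat V1 V2 w ψ
  | _, box φ => ∀ v, Sat V1 V2 v φ

/-- The variable assignment satisfies the `Con` constraint. -/
def ConC {W : Type*} (V1 V2 : ℕ → Set W) : Prop := ∀ x, V1 x ∩ V2 x = ∅

/-- The variable assignment satisfies the `Ground` constraint. -/
def GroundC {W : Type*} (V1 V2 : ℕ → Set W) : Prop :=
  ∀ x, (V1 x).Nonempty → (V2 x).Nonempty → ((V1 x ∪ V2 x)ᶜ : Set W).Nonempty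

/-- The variable assignment satisfies the `Min` constraint. -/
def MinC {W : Type*} (V1 V2 : ℕ → Set W) : Prop :=
  ∀ l : List ℕ, l ≠ [] → (∀ x ∈ l, ((V1 x ∪ V2 x)ᶜ : Set W).Nonempty) →
    (⋂ x ∈ l, ((V1 x ∪ V2 x)ᶜ : Set W)).Nonempty

/-- The prime conditions for a subset `S` of the tensor `[3]^n`, realized as
`Fin n → Fin 3` where the value `0` stands for the layer `T`, `1` for `F`,
and `2` for `N` (i.e. `1, 2, 3` in the paper's numbering). -/
def PrimeConditions (n : ℕ) (S : Set (Fin n → Fin 3)) : Prop :=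
  S.Nonempty ∧
  (∀ j : Fin n, (S ∩ {a | a j = 0}).Nonempty → (S ∩ {a | a j = 1}).Nonempty →
      (S ∩ {a | a j = 2}).Nonempty) ∧
  ∀ J : Set (Fin n), J.Nonempty →
    (∀ j ∈ J, (S ∩ {a | a j = 2}).Nonempty) →
    (S ∩ ⋂ j ∈ J, {a | a j = 2}).Nonempty

/-- `χ_1 = T`, `χ_2 = F`, `χ_3 = N` (with `Fin 3` values `0, 1, 2`). -/
def chi (k : Fin 3) (x : ℕ) : Fml :=
  if k = 0 then tt x else if k = 1 then ff x else Nf x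

/-- The extensional `n`-isolator `φ_a = χ_{a_1}(x_1) ∧ … ∧ χ_{a_n}(x_n)`
associated with a tuple `a ∈ [3]^n`. -/
def tupleFml {n : ℕ} (a : Fin n → Fin 3) : Fml :=
  bigAnd ((List.finRange n).map (fun i => chi (a i) (i.1 + 1)))

open Classical in
/-- The pre-`n`-isolator of `S ⊆ [3]^n`:
`⋀_{a ∈ S} ◇φ_a ∧ ⋀_{a ∉ S} ¬◇φ_a`. -/
noncomputable def preIsolator (n : ℕ) (S : Set (Fin n → Fin 3)) : Fml :=
  bigAnd (((Finset.univ : Finset (Fin n → Fin 3)).toList).map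
    (fun a => if a ∈ S then dia (tupleFml a) else Fml.neg (dia (tupleFml a))))


section OneVarCount
open Fml

/-! ### Propositional helper lemmas -/

private lemma pmp {A B : Fml} (h : Prv ∅ (imp A B)) (a : Prv ∅ A) : Prv ∅ B := Prv.mp h a

private lemma ptrans {A B C : Fml} (h1 : Prv ∅ (imp A B)) (h2 : Prv ∅ (imp B C)) :
    Prv ∅ (imp A C) := by
  have t : Tautology (imp (imp A B) (imp (imp B C) (imp A C))) := by
    intro v
    simp only [imp, evalProp]
    cases evalProp v A <;> cases evalProp v B <;> cases evalProp v C <;> rfl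
  exact pmp (pmp (Prv.taut t) h1) h2

private lemma pweaken {A B : Fml} (h : Prv ∅ B) : Prv ∅ (imp A B) := by
  have t : Tautology (imp B (imp A B)) := by
    intro v; simp only [imp, evalProp]
    cases evalProp v A <;> cases evalProp v B <;> rfl
  exact pmp (Prv.taut t) h

private lemma pand_l (A B : Fml) : Prv ∅ (imp (and A B) A) := by
  apply Prv.taut; intro v; simp only [imp, evalProp]
  cases evalProp v A <;> cases evalProp v B <;> rfl

private lemma pand_r (A B : Fml) : Prv ∅ (imp (and A B) B) := by
  apply Prv.taut; intro v; simp only [imp, evalProp]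
  cases evalProp v A <;> cases evalProp v B <;> rfl

private lemma ptrans2 {X P Q R : Fml} (h1 : Prv ∅ (imp X P)) (h2 : Prv ∅ (imp X Q))
    (h3 : Prv ∅ (imp P (imp Q R))) : Prv ∅ (imp X R) := by
  have t : Tautology (imp (imp X P) (imp (imp X Q) (imp (imp P (imp Q R)) (imp X R)))) := by
    intro v; simp only [imp, evalProp]
    cases evalProp v X <;> cases evalProp v P <;> cases evalProp v Q <;> cases evalProp v R <;> rfl
  exact pmp (pmp (pmp (Prv.taut t) h1) h2) h3

private lemma pimp_and {X A B : Fml} (h1 : Prv ∅ (imp X A)) (h2 : Prv ∅ (imp X B)) :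
    Prv ∅ (imp X (and A B)) := by
  refine ptrans2 h1 h2 ?_
  apply Prv.taut; intro v; simp only [imp, evalProp]
  cases evalProp v A <;> cases evalProp v B <;> rfl

private lemma pand_intro {A B : Fml} (h1 : Prv ∅ A) (h2 : Prv ∅ B) : Prv ∅ (and A B) := by
  have t : Tautology (imp A (imp B (and A B))) := by
    intro v; simp only [imp, evalProp]
    cases evalProp v A <;> cases evalProp v B <;> rfl
  exact pmp (pmp (Prv.taut t) h1) h2

private lemma por_inl (A B : Fml) : Prv ∅ (imp A (or A B)) := by
  apply Prv.taut; intro v; simp only [imp, Fml.or, evalProp]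
  cases evalProp v A <;> cases evalProp v B <;> rfl

private lemma por_inr (A B : Fml) : Prv ∅ (imp B (or A B)) := by
  apply Prv.taut; intro v; simp only [imp, Fml.or, evalProp]
  cases evalProp v A <;> cases evalProp v B <;> rfl

private lemma por_elim {A B C : Fml} (h1 : Prv ∅ (imp A C)) (h2 : Prv ∅ (imp B C)) :
    Prv ∅ (imp (or A B) C) := by
  have t : Tautology (imp (imp A C) (imp (imp B C) (imp (or A B) C))) := by
    intro v; simp only [imp, Fml.or, evalProp]
    cases evalProp v A <;> cases evalProp v B <;> cases evalProp v C <;> rfl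
  exact pmp (pmp (Prv.taut t) h1) h2

private lemma pdni {X A : Fml} (h : Prv ∅ (imp X A)) : Prv ∅ (imp X (neg (neg A))) := by
  refine ptrans h ?_
  apply Prv.taut; intro v; simp only [imp, evalProp]
  cases evalProp v A <;> rfl

private lemma pcontrapose {A B : Fml} (h : Prv ∅ (imp A B)) : Prv ∅ (imp (neg B) (neg A)) := by
  have t : Tautology (imp (imp A B) (imp (neg B) (neg A))) := by
    intro v; simp only [imp, evalProp]
    cases evalProp v A <;> cases evalProp v B <;> rfl
  exact pmp (Prv.taut t) h

private lemma pswap {A B C : Fml} (h : Prv ∅ (imp A (imp B C))) :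
    Prv ∅ (imp B (imp A C)) := by
  have t : Tautology (imp (imp A (imp B C)) (imp B (imp A C))) := by
    intro v; simp only [imp, evalProp]
    cases evalProp v A <;> cases evalProp v B <;> cases evalProp v C <;> rfl
  exact pmp (Prv.taut t) h

private lemma pcurry {A B C : Fml} (h : Prv ∅ (imp (and A B) C)) :
    Prv ∅ (imp A (imp B C)) := by
  have t : Tautology (imp (imp (and A B) C) (imp A (imp B C))) := by
    intro v; simp only [imp, evalProp]
    cases evalProp v A <;> cases evalProp v B <;> cases evalProp v C <;> rfl
  exact pmp (Prv.taut t) h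

private lemma pmt2 {X P Q : Fml} (h1 : Prv ∅ (imp X (imp P Q))) (h2 : Prv ∅ (imp X (neg Q))) :
    Prv ∅ (imp X (neg P)) := by
  refine ptrans2 h1 h2 ?_
  apply Prv.taut; intro v; simp only [imp, evalProp]
  cases evalProp v P <;> cases evalProp v Q <;> rfl

private lemma prearr {A B C : Fml} (h : Prv ∅ (imp (and A B) (neg C))) :
    Prv ∅ (imp B (imp C (neg A))) := by
  have t : Tautology (imp (imp (and A B) (neg C)) (imp B (imp C (neg A)))) := by
    intro v; simp only [imp, evalProp]
    cases evalProp v A <;> cases evalProp v B <;> cases evalProp v C <;> rfl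
  exact pmp (Prv.taut t) h

private lemma pabsorb {D E M C : Fml} (h1 : Prv ∅ (imp D E)) (h2 : Prv ∅ (imp M (neg E))) :
    Prv ∅ (imp M (imp D C)) := by
  have t : Tautology (imp (imp D E) (imp (imp M (neg E)) (imp M (imp D C)))) := by
    intro v; simp only [imp, evalProp]
    cases evalProp v D <;> cases evalProp v E <;> cases evalProp v M <;>
      cases evalProp v C <;> rfl
  exact pmp (pmp (Prv.taut t) h1) h2

private lemma piff_intro {A B : Fml} (h1 : Prv ∅ (imp A B)) (h2 : Prv ∅ (imp B A)) :
    Prv ∅ (Fml.iff A B) := pand_intro h1 h2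

end OneVarCount
section OneVarCount2
open Fml

/-! ### Modal helper lemmas -/

private lemma boxmono {A B : Fml} (h : Prv ∅ (imp A B)) :
    Prv ∅ (imp (box A) (box B)) := pmp (Prv.axK A B) (Prv.nec h)

private lemma tdni (A : Fml) : Prv ∅ (imp A (neg (neg A))) := by
  apply Prv.taut; intro v; simp only [imp, evalProp]; cases evalProp v A <;> rfl

private lemma tdne (A : Fml) : Prv ∅ (imp (neg (neg A)) A) := by
  apply Prv.taut; intro v; simp only [imp, evalProp]; cases evalProp v A <;> rfl

/-- `⊢ A → ◇A` -/
private lemma pdiaT (A : Fml) : Prv ∅ (imp A (dia A)) := by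
  have h := Prv.axT (Ax := (∅ : Set Fml)) (neg A)
  -- h : □¬A → ¬A ; goal : A → ¬□¬A
  have t : Tautology (imp (imp (box (neg A)) (neg A)) (imp A (neg (box (neg A))))) := by
    intro v; simp only [imp, evalProp]
    cases evalProp v A <;> cases v (box (neg A)) <;> rfl
  exact pmp (Prv.taut t) h

/-- `⊢ ◇□A → □A` -/
private lemma pdia_box (A : Fml) : Prv ∅ (imp (dia (box A)) (box A)) := by
  have s1 : Prv ∅ (imp (box A) (box (neg (neg A)))) := boxmono (tdni A)
  have s1' : Prv ∅ (imp (dia (neg A)) (neg (box A))) := pcontrapose s1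
  have s2 : Prv ∅ (imp (box (dia (neg A))) (box (neg (box A)))) := boxmono s1'
  have s3 : Prv ∅ (imp (dia (box A)) (neg (box (dia (neg A))))) := pcontrapose s2
  have s4 : Prv ∅ (imp (neg (box (dia (neg A)))) (neg (dia (neg A)))) :=
    pcontrapose (Prv.ax5 (neg A))
  have s5 : Prv ∅ (imp (neg (dia (neg A))) (box (neg (neg A)))) := tdne _
  have s6 : Prv ∅ (imp (box (neg (neg A))) (box A)) := boxmono (tdne A)
  exact ptrans s3 (ptrans s4 (ptrans s5 s6))

/-- `⊢ □A → □□A` -/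
private lemma pfour (A : Fml) : Prv ∅ (imp (box A) (box (box A))) :=
  ptrans (pdiaT (box A)) (ptrans (Prv.ax5 (box A)) (boxmono (pdia_box A)))

/-- `⊢ ¬◇A → □¬◇A` -/
private lemma pnegdia_box (A : Fml) : Prv ∅ (imp (neg (dia A)) (box (neg (dia A)))) := by
  have s1 : Prv ∅ (imp (neg (dia A)) (box (neg A))) := tdne _
  have s2 : Prv ∅ (imp (box (neg A)) (box (box (neg A)))) := pfour (neg A)
  have s3 : Prv ∅ (imp (box (box (neg A))) (box (neg (dia A)))) := boxmono (tdni _)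
  exact ptrans s1 (ptrans s2 s3)

/-- collect boxes over a conjunction -/
private lemma pbox_and {A B : Fml} :
    Prv ∅ (imp (box A) (imp (box B) (box (and A B)))) := by
  have t : Tautology (imp A (imp B (and A B))) := by
    intro v; simp only [imp, evalProp]; cases evalProp v A <;> cases evalProp v B <;> rfl
  have k1 : Prv ∅ (imp (box A) (box (imp B (and A B)))) := boxmono (Prv.taut t)
  have k2 := Prv.axK (Ax := (∅ : Set Fml)) B (and A B)
  exact ptrans k1 k2

end OneVarCount2
section OneVarCount3
open Fml

/-! ### conjunctions/disjunctions over lists, state descriptions -/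

private def myBot : Fml := Fml.and (tt 1) (Fml.neg (tt 1))

private def conj : List Fml → Fml
  | [] => Fml.neg myBot
  | φ :: l => Fml.and φ (conj l)

private def disj : List Fml → Fml
  | [] => myBot
  | φ :: l => Fml.or φ (disj l)

private lemma pnotbot : Prv ∅ (Fml.neg myBot) := by
  apply Prv.taut; intro v; simp only [myBot, evalProp]; cases v (tt 1) <;> rfl

private lemma pbot_imp (C : Fml) : Prv ∅ (imp myBot C) := by
  apply Prv.taut; intro v; simp only [myBot, imp, evalProp]
  cases v (tt 1) <;> cases evalProp v C <;> rfl

private lemma pconj_elim {c : Fml} : ∀ {l : List Fml}, c ∈ l → Prv ∅ (imp (conj l) c)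
  | [], h => absurd h List.not_mem_nil
  | a :: l, h => by
      rcases List.mem_cons.1 h with h | h
      · subst h; exact pand_l _ _
      · exact ptrans (pand_r _ _) (pconj_elim h)

private lemma pconj_intro {X : Fml} : ∀ {l : List Fml}, (∀ c ∈ l, Prv ∅ (imp X c)) →
    Prv ∅ (imp X (conj l))
  | [], _ => pweaken pnotbot
  | a :: l, h => pimp_and (h a List.mem_cons_self)
      (pconj_intro fun c hc => h c (List.mem_cons_of_mem a hc))

private lemma pdisj_intro {c : Fml} : ∀ {l : List Fml}, c ∈ l → Prv ∅ (imp c (disj l))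
  | [], h => absurd h List.not_mem_nil
  | a :: l, h => by
      rcases List.mem_cons.1 h with h | h
      · subst h; exact por_inl _ _
      · exact ptrans (pdisj_intro h) (por_inr _ _)

private lemma pdisj_elim {C : Fml} : ∀ {l : List Fml}, (∀ c ∈ l, Prv ∅ (imp c C)) →
    Prv ∅ (imp (disj l) C)
  | [], _ => pbot_imp C
  | a :: l, h => por_elim (h a List.mem_cons_self)
      (pdisj_elim fun c hc => h c (List.mem_cons_of_mem a hc))

private lemma pconj_box : ∀ {l : List Fml}, (∀ c ∈ l, Prv ∅ (imp c (box c))) →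
    Prv ∅ (imp (conj l) (box (conj l)))
  | [], _ => pweaken (Prv.nec pnotbot)
  | a :: l, h => by
      have hA : Prv ∅ (imp (and a (conj l)) (box a)) :=
        ptrans (pand_l _ _) (h a List.mem_cons_self)
      have hB : Prv ∅ (imp (and a (conj l)) (box (conj l))) :=
        ptrans (pand_r _ _) (pconj_box fun c hc => h c (List.mem_cons_of_mem a hc))
      exact ptrans2 hA hB pbox_and

private lemma pdistrib {l1 l2 : List Fml} {C : Fml} (h1 : Prv ∅ (disj l1))
    (h2 : Prv ∅ (disj l2)) (h : ∀ a ∈ l1, ∀ b ∈ l2, Prv ∅ (imp a (imp b C))) :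
    Prv ∅ C :=
  pmp (pdisj_elim fun a ha =>
    pmp (pdisj_elim fun b hb => pswap (h a ha b hb)) h2) h1

/-! ### sign-pattern exhaustiveness -/

private def signedLists : List Fml → List (List Fml)
  | [] => [[]]
  | c :: l => (signedLists l).flatMap fun p => [c :: p, Fml.neg c :: p]

private lemma pexcl_signed : ∀ (l : List Fml), Prv ∅ (disj ((signedLists l).map conj))
  | [] => by
      simp only [signedLists, List.map, disj, conj]
      exact pmp (por_inl _ _) pnotbot
  | c :: l => by
      refine pmp (pdisj_elim fun q hq => ?_) (pexcl_signed l)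
      rcases List.mem_map.1 hq with ⟨p, hp, rfl⟩
      have tsplit : Prv ∅ (imp (conj p)
          (or (and c (conj p)) (and (Fml.neg c) (conj p)))) := by
        apply Prv.taut; intro v; simp only [imp, Fml.or, evalProp]
        cases evalProp v c <;> cases evalProp v (conj p) <;> rfl
      have m1 : (c :: p) ∈ signedLists (c :: l) := by
        simp only [signedLists, List.mem_flatMap]
        exact ⟨p, hp, by simp⟩
      have m2 : (Fml.neg c :: p) ∈ signedLists (c :: l) := by
        simp only [signedLists, List.mem_flatMap]
        exact ⟨p, hp, by simp⟩
      have i1 : Prv ∅ (imp (and c (conj p)) (disj ((signedLists (c :: l)).map conj))) :=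
        pdisj_intro (List.mem_map.2 ⟨c :: p, m1, rfl⟩)
      have i2 : Prv ∅ (imp (and (Fml.neg c) (conj p))
          (disj ((signedLists (c :: l)).map conj))) :=
        pdisj_intro (List.mem_map.2 ⟨Fml.neg c :: p, m2, rfl⟩)
      exact ptrans tsplit (por_elim i1 i2)

end OneVarCount3
section OneVarCount4
open Fml

/-! ### state descriptions and modal profiles -/

private def statePairs : List (Bool × Bool) := [(true,true),(true,false),(false,true),(false,false)]

private def cnd (b : Bool) (φ : Fml) : Fml := if b then φ else Fml.neg φ

private def delta (s : Bool × Bool) : Fml := Fml.and (cnd s.1 (tt 1)) (cnd s.2 (ff 1))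

private def modal (S : Bool × Bool → Bool) : Fml :=
  conj (statePairs.map fun t => if S t then dia (delta t) else Fml.neg (dia (delta t)))

private def psi (S : Bool × Bool → Bool) (s : Bool × Bool) : Fml := Fml.and (delta s) (modal S)

private def funsList : List (Bool × Bool → Bool) :=
  [true, false].flatMap fun b4 => [true, false].flatMap fun b3 =>
    [true, false].flatMap fun b2 => [true, false].map fun b1 =>
      fun t : Bool × Bool =>
        if t = (true, true) then b1 else if t = (true, false) then b2
        else if t = (false, true) then b3 else b4

private lemma funsList_complete (S : Bool × Bool → Bool) : S ∈ funsList := by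
  simp only [funsList, List.mem_flatMap, List.mem_map]
  refine ⟨S (false, false), by simp, S (false, true), by simp,
    S (true, false), by simp, S (true, true), by simp, ?_⟩
  funext t
  rcases t with ⟨a, b⟩
  cases a <;> cases b <;> simp

private lemma excl4 : Prv ∅ (disj (statePairs.map delta)) := by
  apply Prv.taut; intro v
  simp only [statePairs, delta, cnd, disj, Fml.or, myBot, evalProp, List.map,
    if_true, if_false, Bool.false_eq_true, ite_true, ite_false]
  cases v (tt 1) <;> cases v (ff 1) <;> rfl

private lemma excl16 : Prv ∅ (disj (funsList.map modal)) := by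
  have key : funsList.map modal =
      (signedLists (statePairs.map fun t => dia (delta t))).map conj := by decide
  rw [key]
  exact pexcl_signed _

end OneVarCount4
section OneVarCount5
open Fml

private def satB (S : Bool × Bool → Bool) (w : Bool × Bool) : Fml → Bool
  | tt _ => w.1
  | ff _ => w.2
  | Fml.neg φ => !(satB S w φ)
  | Fml.and φ ψ => satB S w φ && satB S w ψ
  | Fml.box φ => statePairs.all fun t => !(S t) || satB S t φ

private lemma mem_statePairs (t : Bool × Bool) : t ∈ statePairs := by
  rcases t with ⟨a, b⟩; cases a <;> cases b <;> simp [statePairs]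

private lemma satB_box_true {S : Bool × Bool → Bool} {w : Bool × Bool} {φ : Fml} :
    satB S w (box φ) = true ↔ ∀ t, S t = true → satB S t φ = true := by
  simp only [satB, List.all_eq_true]
  constructor
  · intro h t hS
    have := h t (mem_statePairs t)
    simpa [hS] using this
  · intro h t _
    cases hS : S t with
    | false => simp
    | true => simp [h t hS]

private lemma tneg_and_l (A B : Fml) : Prv ∅ (imp (neg A) (neg (and A B))) := by
  apply Prv.taut; intro v; simp only [imp, evalProp]
  cases evalProp v A <;> cases evalProp v B <;> rfl

private lemma tneg_and_r (A B : Fml) : Prv ∅ (imp (neg B) (neg (and A B))) := by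
  apply Prv.taut; intro v; simp only [imp, evalProp]
  cases evalProp v A <;> cases evalProp v B <;> rfl

private lemma mem_modal_pos {S : Bool × Bool → Bool} {t : Bool × Bool} (h : S t = true) :
    Prv ∅ (imp (modal S) (dia (delta t))) := by
  apply pconj_elim
  exact List.mem_map.2 ⟨t, mem_statePairs t, by simp [h]⟩

private lemma mem_modal_neg {S : Bool × Bool → Bool} {t : Bool × Bool} (h : S t = false) :
    Prv ∅ (imp (modal S) (neg (dia (delta t)))) := by
  apply pconj_elim
  exact List.mem_map.2 ⟨t, mem_statePairs t, by simp [h]⟩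

private lemma modal_box (S : Bool × Bool → Bool) :
    Prv ∅ (imp (modal S) (box (modal S))) := by
  apply pconj_box
  intro c hc
  rcases List.mem_map.1 hc with ⟨t, _, rfl⟩
  cases hS : S t with
  | true => simpa [hS] using Prv.ax5 (Ax := (∅ : Set Fml)) (delta t)
  | false => simpa [hS] using pnegdia_box (delta t)

private lemma main_claim : ∀ (φ : Fml), Is1Formula φ →
    ∀ (S : Bool × Bool → Bool) (s : Bool × Bool),
      (satB S s φ = true → Prv ∅ (imp (psi S s) φ)) ∧
      (satB S s φ = false → Prv ∅ (imp (psi S s) (neg φ))) := by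
  intro φ
  induction φ with
  | tt x =>
      intro h1 S s
      have hx : x = 1 := by
        have := h1 (show x ∈ vars (tt x) by simp [vars])
        simp only [Set.mem_setOf_eq] at this
        omega
      subst hx
      have step : Prv ∅ (imp (psi S s) (cnd s.1 (tt 1))) := by
        simp only [psi, delta]
        exact ptrans (pand_l _ _) (pand_l _ _)
      constructor
      · intro h
        have hs1 : s.1 = true := by simpa [satB] using h
        rw [hs1] at step; simpa [cnd] using step
      · intro h
        have hs1 : s.1 = false := by simpa [satB] using h
        rw [hs1] at step; simpa [cnd] using step
  | ff x =>
      intro h1 S s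
      have hx : x = 1 := by
        have := h1 (show x ∈ vars (ff x) by simp [vars])
        simp only [Set.mem_setOf_eq] at this
        omega
      subst hx
      have step : Prv ∅ (imp (psi S s) (cnd s.2 (ff 1))) := by
        simp only [psi, delta]
        exact ptrans (pand_l _ _) (pand_r _ _)
      constructor
      · intro h
        have hs2 : s.2 = true := by simpa [satB] using h
        rw [hs2] at step; simpa [cnd] using step
      · intro h
        have hs2 : s.2 = false := by simpa [satB] using h
        rw [hs2] at step; simpa [cnd] using step
  | neg φ ih =>
      intro h1 S s
      have h1' : Is1Formula φ := h1
      constructor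
      · intro h
        have : satB S s φ = false := by simpa [satB] using h
        exact (ih h1' S s).2 this
      · intro h
        have : satB S s φ = true := by simpa [satB] using h
        exact pdni ((ih h1' S s).1 this)
  | and φ χ ihφ ihχ =>
      intro h1 S s
      have hφ : Is1Formula φ := fun y hy => h1 (Set.mem_union_left _ hy)
      have hχ : Is1Formula χ := fun y hy => h1 (Set.mem_union_right _ hy)
      constructor
      · intro h
        have h' := h
        simp only [satB, Bool.and_eq_true] at h'
        exact pimp_and ((ihφ hφ S s).1 h'.1) ((ihχ hχ S s).1 h'.2)
      · intro h
        simp only [satB, Bool.and_eq_false_iff] at h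
        rcases h with h | h
        · exact ptrans ((ihφ hφ S s).2 h) (tneg_and_l _ _)
        · exact ptrans ((ihχ hχ S s).2 h) (tneg_and_r _ _)
  | box φ ih =>
      intro h1 S s
      have h1' : Is1Formula φ := h1
      have hM2 := modal_box S
      constructor
      · intro h
        have hall := satB_box_true.1 h
        have stepA : ∀ t : Bool × Bool, Prv ∅ (imp (modal S) (imp (delta t) φ)) := by
          intro t
          cases hS : S t with
          | true =>
              have ihp : Prv ∅ (imp (and (delta t) (modal S)) φ) := by
                have := (ih h1' S t).1 (hall t hS)
                simpa [psi] using this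
              exact pswap (pcurry ihp)
          | false => exact pabsorb (pdiaT (delta t)) (mem_modal_neg hS)
        have stepB : Prv ∅ (imp (modal S) φ) := by
          refine pmp (pdisj_elim fun c hc => ?_) excl4
          rcases List.mem_map.1 hc with ⟨t, _, rfl⟩
          exact pswap (stepA t)
        have final : Prv ∅ (imp (and (delta s) (modal S)) (box φ)) :=
          ptrans (pand_r _ _) (ptrans hM2 (boxmono stepB))
        simpa [psi] using final
      · intro h
        have hex : ∃ t, S t = true ∧ satB S t φ = false := by
          by_contra hc
          push_neg at hc
          simp only [ne_eq, Bool.not_eq_false] at hc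
          have h2 : satB S s (box φ) = true := satB_box_true.2 hc
          rw [h2] at h; simp at h
        rcases hex with ⟨t, hSt, hsat⟩
        have ih_t : Prv ∅ (imp (and (delta t) (modal S)) (neg φ)) := by
          have := (ih h1' S t).2 hsat
          simpa [psi] using this
        have r1 : Prv ∅ (imp (modal S) (imp φ (neg (delta t)))) := prearr ih_t
        have c1 : Prv ∅ (imp (modal S) (imp (box φ) (box (neg (delta t))))) :=
          ptrans hM2 (ptrans (boxmono r1) (Prv.axK _ _))
        have c2 : Prv ∅ (imp (modal S) (neg (box (neg (delta t))))) := by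
          have := mem_modal_pos hSt
          simpa [dia] using this
        have c3 : Prv ∅ (imp (modal S) (neg (box φ))) := pmt2 c1 c2
        have final : Prv ∅ (imp (and (delta s) (modal S)) (neg (box φ))) :=
          ptrans (pand_r _ _) c3
        simpa [psi] using final

end OneVarCount5
section OneVarCount6
open Fml

private def allPairs : List ((Bool × Bool → Bool) × (Bool × Bool)) :=
  funsList.flatMap fun S => statePairs.map fun s => (S, s)

private lemma mem_allPairs (p : (Bool × Bool → Bool) × (Bool × Bool)) : p ∈ allPairs := by
  rcases p with ⟨S, s⟩
  exact List.mem_flatMap.2 ⟨S, funsList_complete S,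
    List.mem_map.2 ⟨s, mem_statePairs s, rfl⟩⟩

private def thB (φ : Fml) : (Bool × Bool → Bool) × (Bool × Bool) → Bool :=
  fun p => p.1 p.2 && satB p.1 p.2 φ

private def NF (A : (Bool × Bool → Bool) × (Bool × Bool) → Bool) : Fml :=
  disj ((allPairs.filter (fun p => A p)).map fun p => psi p.1 p.2)

/-! ### `Is1Formula` for the normal forms -/

private lemma is1_and {A B : Fml} (h1 : Is1Formula A) (h2 : Is1Formula B) :
    Is1Formula (Fml.and A B) := Set.union_subset h1 h2

private lemma is1_neg {A : Fml} (h : Is1Formula A) : Is1Formula (Fml.neg A) := h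

private lemma is1_box {A : Fml} (h : Is1Formula A) : Is1Formula (Fml.box A) := h

private lemma is1_tt : Is1Formula (tt 1) := by
  intro y hy; simp only [vars, Set.mem_singleton_iff] at hy; subst hy; exact ⟨le_refl 1, le_refl 1⟩

private lemma is1_ff : Is1Formula (ff 1) := by
  intro y hy; simp only [vars, Set.mem_singleton_iff] at hy; subst hy; exact ⟨le_refl 1, le_refl 1⟩

private lemma is1_myBot : Is1Formula myBot := is1_and is1_tt (is1_neg is1_tt)

private lemma is1_cnd {b : Bool} {A : Fml} (h : Is1Formula A) : Is1Formula (cnd b A) := by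
  cases b <;> simp only [cnd, if_true, if_false] <;> first | exact h | exact is1_neg h

private lemma is1_delta (s : Bool × Bool) : Is1Formula (delta s) :=
  is1_and (is1_cnd is1_tt) (is1_cnd is1_ff)

private lemma is1_conj {l : List Fml} (h : ∀ c ∈ l, Is1Formula c) : Is1Formula (conj l) := by
  induction l with
  | nil => exact is1_neg is1_myBot
  | cons a l ih =>
      exact is1_and (h a List.mem_cons_self)
        (ih fun c hc => h c (List.mem_cons_of_mem a hc))

private lemma is1_disj {l : List Fml} (h : ∀ c ∈ l, Is1Formula c) : Is1Formula (disj l) := by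
  induction l with
  | nil => exact is1_myBot
  | cons a l ih =>
      exact is1_neg (is1_and (is1_neg (h a List.mem_cons_self))
        (is1_neg (ih fun c hc => h c (List.mem_cons_of_mem a hc))))

private lemma is1_dia {A : Fml} (h : Is1Formula A) : Is1Formula (dia A) :=
  is1_neg (is1_box (is1_neg h))

private lemma is1_modal (S : Bool × Bool → Bool) : Is1Formula (modal S) := by
  apply is1_conj
  intro c hc
  rcases List.mem_map.1 hc with ⟨t, _, rfl⟩
  cases S t <;> simp only [if_true, if_false, Bool.false_eq_true] <;>
    first | exact is1_dia (is1_delta t) | exact is1_neg (is1_dia (is1_delta t))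

private lemma is1_psi (S : Bool × Bool → Bool) (s : Bool × Bool) : Is1Formula (psi S s) :=
  is1_and (is1_delta s) (is1_modal S)

private lemma is1_NF (A : (Bool × Bool → Bool) × (Bool × Bool) → Bool) :
    Is1Formula (NF A) := by
  apply is1_disj
  intro c hc
  rcases List.mem_map.1 hc with ⟨p, _, rfl⟩
  exact is1_psi p.1 p.2

/-! ### Completeness: every 1-formula is equivalent to its normal form -/

private lemma taut_k (A B : Fml) : Prv ∅ (imp B (imp A B)) := by
  apply Prv.taut; intro v; simp only [imp, evalProp]
  cases evalProp v A <;> cases evalProp v B <;> rfl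

private lemma taut_exfalso (A B : Fml) : Prv ∅ (imp (neg A) (imp A B)) := by
  apply Prv.taut; intro v; simp only [imp, evalProp]
  cases evalProp v A <;> cases evalProp v B <;> rfl

private lemma compl_dir1 {φ : Fml} (h : Is1Formula φ) :
    Prv ∅ (imp (NF (thB φ)) φ) := by
  apply pdisj_elim
  intro c hc
  rcases List.mem_map.1 hc with ⟨p, hp, rfl⟩
  have hfilter := List.mem_filter.1 hp
  have hth : thB φ p = true := by simpa using hfilter.2
  have hsat : satB p.1 p.2 φ = true := by
    simp only [thB, Bool.and_eq_true] at hth; exact hth.2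
  exact (main_claim φ h p.1 p.2).1 hsat

private lemma compl_dir2 {φ : Fml} (h : Is1Formula φ) :
    Prv ∅ (imp φ (NF (thB φ))) := by
  refine pdistrib excl4 excl16 ?_
  intro a ha b hb
  rcases List.mem_map.1 ha with ⟨t, _, rfl⟩
  rcases List.mem_map.1 hb with ⟨S, _, rfl⟩
  by_cases hSt : S t = true
  · cases hsat : satB S t φ with
    | true =>
        have hmem : (S, t) ∈ allPairs.filter (fun p => thB φ p) :=
          List.mem_filter.2 ⟨mem_allPairs _, by simp [thB, hSt, hsat]⟩
        have q : Prv ∅ (imp (Fml.and (delta t) (modal S)) (NF (thB φ))) := by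
          have hm : psi S t ∈ (allPairs.filter (fun p => thB φ p)).map
              (fun p => psi p.1 p.2) := List.mem_map.2 ⟨(S, t), hmem, rfl⟩
          have := pdisj_intro hm
          simpa [psi, NF] using this
        exact pcurry (ptrans q (taut_k φ _))
    | false =>
        have q : Prv ∅ (imp (Fml.and (delta t) (modal S)) (neg φ)) := by
          have := (main_claim φ h S t).2 hsat
          simpa [psi] using this
        exact pcurry (ptrans q (taut_exfalso φ _))
  · have hSf : S t = false := by simpa using hSt
    exact pswap (pabsorb (pdiaT (delta t)) (mem_modal_neg hSf))

private lemma piff_symm {A B : Fml} (h : Prv ∅ (Fml.iff A B)) : Prv ∅ (Fml.iff B A) :=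
  pand_intro (pmp (pand_r _ _) h) (pmp (pand_l _ _) h)

private lemma completeness {φ : Fml} (h : Is1Formula φ) :
    Prv ∅ (Fml.iff φ (NF (thB φ))) := piff_intro (compl_dir2 h) (compl_dir1 h)

end OneVarCount6
section OneVarCount7
open Fml

private lemma sat_imp {W : Type} {V1 V2 : ℕ → Set W} {w : W} {A B : Fml} :
    Sat V1 V2 w (imp A B) ↔ (Sat V1 V2 w A → Sat V1 V2 w B) := by
  simp only [imp, Sat]; tauto

private lemma sat_dia {W : Type} {V1 V2 : ℕ → Set W} {w : W} {A : Fml} :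
    Sat V1 V2 w (dia A) ↔ ∃ v, Sat V1 V2 v A := by
  simp only [dia, Sat, not_forall, not_not]

attribute [local instance] Classical.propDecidable

private lemma evalSat {W : Type} (V1 V2 : ℕ → Set W) (w : W) :
    ∀ φ, evalProp (fun ψ => if Sat V1 V2 w ψ then true else false) φ = true ↔
      Sat V1 V2 w φ := by
  classical
  intro φ
  induction φ with
  | tt x => simp only [evalProp]; split <;> simp_all
  | ff x => simp only [evalProp]; split <;> simp_all
  | box ψ _ => simp only [evalProp]; split <;> simp_all
  | neg ψ ih => simp only [evalProp, Sat, Bool.not_eq_true', ← ih]; cases evalProp _ ψ <;> simp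
  | and ψ χ ih1 ih2 => simp only [evalProp, Sat, Bool.and_eq_true, ih1, ih2]

private lemma soundness {φ : Fml} (h : Prv ∅ φ) :
    ∀ (W : Type) (V1 V2 : ℕ → Set W) (w : W), Sat V1 V2 w φ := by
  induction h with
  | taut ht =>
      intro W V1 V2 w
      classical
      exact (evalSat V1 V2 w _).1 (ht _)
  | axK A B =>
      intro W V1 V2 w
      rw [sat_imp, sat_imp]
      intro h1 h2
      simp only [Sat] at h1 h2 ⊢
      intro v
      exact sat_imp.1 (h1 v) (h2 v)
  | axT A =>
      intro W V1 V2 w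
      rw [sat_imp]
      intro h1
      simp only [Sat] at h1
      exact h1 w
  | ax5 A =>
      intro W V1 V2 w
      rw [sat_imp]
      intro h1
      rcases sat_dia.1 h1 with ⟨v, hv⟩
      simp only [Sat]
      intro u
      exact (sat_dia (w := u)).2 ⟨v, hv⟩
  | axm hφ => exact absurd hφ (Set.notMem_empty _)
  | mp h1 h2 ih1 ih2 =>
      intro W V1 V2 w
      exact sat_imp.1 (ih1 W V1 V2 w) (ih2 W V1 V2 w)
  | nec h1 ih =>
      intro W V1 V2 w
      simp only [Sat]
      intro v
      exact ih W V1 V2 v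

/-! ### the canonical models -/

private def Wld (S : Bool × Bool → Bool) : Type := {t : Bool × Bool // S t = true}

private def V1m (S : Bool × Bool → Bool) : ℕ → Set (Wld S) := fun _ => {w | w.1.1 = true}
private def V2m (S : Bool × Bool → Bool) : ℕ → Set (Wld S) := fun _ => {w | w.1.2 = true}

private lemma bridge (S : Bool × Bool → Bool) :
    ∀ (φ : Fml) (w : Wld S), (satB S w.1 φ = true ↔ Sat (V1m S) (V2m S) w φ) := by
  intro φ
  induction φ with
  | tt x => intro w; simp [satB, Sat, V1m, Set.mem_setOf_eq]
  | ff x => intro w; simp [satB, Sat, V2m, Set.mem_setOf_eq]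
  | neg ψ ih => intro w; simp only [satB, Sat, Bool.not_eq_true', ← ih w]
                cases satB S w.1 ψ <;> simp
  | and ψ χ ih1 ih2 => intro w; simp only [satB, Sat, Bool.and_eq_true, ih1 w, ih2 w]
  | box ψ ih =>
      intro w
      simp only [Sat]
      rw [satB_box_true]
      constructor
      · intro h v; exact (ih v).1 (h v.1 v.2)
      · intro h t ht; exact (ih ⟨t, ht⟩).2 (h ⟨t, ht⟩)

/-- provable equivalence gives equal boolean semantics -/
private lemma sound_thB {φ χ : Fml} (h : Prv ∅ (Fml.iff φ χ)) {S : Bool × Bool → Bool}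
    {s : Bool × Bool} (hs : S s = true) : satB S s φ = satB S s χ := by
  have hSat := soundness h (Wld S) (V1m S) (V2m S) ⟨s, hs⟩
  simp only [Fml.iff, Sat] at hSat
  have h1 := sat_imp.1 hSat.1
  have h2 := sat_imp.1 hSat.2
  have b := bridge S
  cases h1' : satB S s φ with
  | true =>
      have h2' : satB S s χ = true := (b χ ⟨s, hs⟩).2 (h1 ((b φ ⟨s, hs⟩).1 h1'))
      rw [h2']
  | false =>
      cases h2' : satB S s χ with
      | false => rfl
      | true =>
          have h3 : satB S s φ = true := (b φ ⟨s, hs⟩).2 (h2 ((b χ ⟨s, hs⟩).1 h2'))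
          rw [h3] at h1'; simp at h1'

end OneVarCount7
section OneVarCount8
open Fml

private lemma boolext {a b : Bool} (h : a = true ↔ b = true) : a = b := by
  cases a <;> cases b <;> simp_all

private lemma satB_delta (S : Bool × Bool → Bool) (w t : Bool × Bool) :
    satB S w (delta t) = decide (w = t) := by
  rcases w with ⟨a, b⟩; rcases t with ⟨c, d⟩
  cases a <;> cases b <;> cases c <;> cases d <;> simp [delta, cnd, satB]

private lemma satB_dia_delta (S : Bool × Bool → Bool) (w t : Bool × Bool) :
    satB S w (dia (delta t)) = S t := by
  rcases t with ⟨c, d⟩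
  cases c <;> cases d <;>
    simp [dia, satB, statePairs, satB_delta, Bool.not_or]

private lemma satB_conj (S : Bool × Bool → Bool) (w : Bool × Bool) :
    ∀ (l : List Fml), (satB S w (conj l) = true ↔ ∀ c ∈ l, satB S w c = true)
  | [] => by simp [conj, satB, myBot]
  | a :: l => by
      simp [conj, satB, Bool.and_eq_true, satB_conj S w l]

private lemma satB_neg (S : Bool × Bool → Bool) (w : Bool × Bool) (A : Fml) :
    satB S w (Fml.neg A) = !satB S w A := rfl

private lemma satB_and (S : Bool × Bool → Bool) (w : Bool × Bool) (A B : Fml) :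
    satB S w (Fml.and A B) = (satB S w A && satB S w B) := rfl

private lemma satB_disj (S : Bool × Bool → Bool) (w : Bool × Bool) :
    ∀ (l : List Fml), (satB S w (disj l) = true ↔ ∃ c ∈ l, satB S w c = true)
  | [] => by simp [disj, satB, myBot]
  | a :: l => by
      rw [show satB S w (disj (a :: l)) = (satB S w a || satB S w (disj l)) from by
        simp [disj, Fml.or, satB]]
      simp [Bool.or_eq_true, satB_disj S w l]

private lemma satB_modal (S S' : Bool × Bool → Bool) (w : Bool × Bool) :
    satB S w (modal S') = true ↔ S' = S := by
  constructor
  · intro h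
    funext t
    have := (satB_conj S w _).1 h _
      (List.mem_map.2 ⟨t, mem_statePairs t, rfl⟩)
    cases hS' : S' t with
    | true =>
        rw [hS'] at this
        simp only [if_true] at this
        rw [satB_dia_delta] at this
        exact this.symm
    | false =>
        rw [hS'] at this
        simp only [Bool.false_eq_true, if_false] at this
        rw [satB_neg, satB_dia_delta, Bool.not_eq_true'] at this
        exact this.symm
  · rintro rfl
    apply (satB_conj _ _ _).2
    intro c hc
    rcases List.mem_map.1 hc with ⟨t, _, rfl⟩
    cases hS : S' t with
    | true => simp [hS, satB_dia_delta]
    | false => simp [hS, satB_neg, satB_dia_delta]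

private lemma satB_psi (S S' : Bool × Bool → Bool) (w s' : Bool × Bool) :
    satB S w (psi S' s') = true ↔ (w = s' ∧ S' = S) := by
  simp only [psi, satB_and, Bool.and_eq_true, satB_delta, decide_eq_true_eq, satB_modal]

private lemma satB_NF (S : Bool × Bool → Bool) (s : Bool × Bool)
    (A : (Bool × Bool → Bool) × (Bool × Bool) → Bool) :
    satB S s (NF A) = A (S, s) := by
  apply boolext
  rw [NF, satB_disj]
  constructor
  · rintro ⟨c, hc, hsat⟩
    rcases List.mem_map.1 hc with ⟨p, hp, rfl⟩
    rcases (satB_psi S p.1 s p.2).1 hsat with ⟨rfl, rfl⟩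
    have := (List.mem_filter.1 hp).2
    simpa using this
  · intro hA
    refine ⟨psi S s, List.mem_map.2 ⟨(S, s),
      List.mem_filter.2 ⟨mem_allPairs _, by simpa using hA⟩, rfl⟩, ?_⟩
    exact (satB_psi S S s s).2 ⟨rfl, rfl⟩

private def extA (A : {p : (Bool × Bool → Bool) × (Bool × Bool) // p.1 p.2 = true} → Bool) :
    (Bool × Bool → Bool) × (Bool × Bool) → Bool :=
  fun p => if h : p.1 p.2 = true then A ⟨p, h⟩ else false

private lemma extA_satB (φ : Fml) :
    extA (fun τ => satB τ.1.1 τ.1.2 φ) = thB φ := by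
  funext p
  by_cases h : p.1 p.2 = true
  · simp [extA, h, thB]
  · simp [extA, h, thB, Bool.eq_false_iff.2 h]

private noncomputable def theEquiv :
    Quot (fun φ ψ : {f : Fml // Is1Formula f} => Prv (∅ : Set Fml) (Fml.iff φ.1 ψ.1)) ≃
      ({p : (Bool × Bool → Bool) × (Bool × Bool) // p.1 p.2 = true} → Bool) where
  toFun := Quot.lift (fun φ τ => satB τ.1.1 τ.1.2 φ.1)
    (by intro a b h; funext τ; exact sound_thB h τ.2)
  invFun A := Quot.mk _ ⟨NF (extA A), is1_NF _⟩
  left_inv := by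
    intro q
    induction q using Quot.ind with
    | _ φ =>
      apply Quot.sound
      show Prv ∅ (Fml.iff (NF (extA fun τ => satB τ.1.1 τ.1.2 φ.1)) φ.1)
      rw [extA_satB]
      exact piff_symm (completeness φ.2)
  right_inv := by
    intro A
    funext τ
    show satB τ.1.1 τ.1.2 (NF (extA A)) = A τ
    rw [satB_NF]
    rcases τ with ⟨⟨S, s⟩, h⟩
    simp only [extA]
    exact dif_pos h

private lemma card_typ :
    Fintype.card {p : (Bool × Bool → Bool) × (Bool × Bool) // p.1 p.2 = true} = 32 := by
  decide

end OneVarCount8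
/-- up to S5-provable equivalence there are exactly
`2^32 = 4294967296` one-variable formulas. -/
theorem count_one_formulas_S5 :
    Nat.card (Quot (fun φ ψ : {f : Fml // Is1Formula f} =>
      Prv (∅ : Set Fml) (Fml.iff φ.1 ψ.1))) = 4294967296 := by
  rw [Nat.card_congr theEquiv, Nat.card_eq_fintype_card, Fintype.card_fun, card_typ]
  norm_num

end KripkeModal
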